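/- Let f ∈ F_{2^m}[x] with deg(f) ≤ 2^μ, and suppose f agrees with a polynomial f̂ of degree < 2^μ at the 2^μ points ω_0 + β, …, ω_{2^μ−1} + β. Then f(x) = (f(ω_{2^μ}+β) − f̂(ω_{2^μ}+β))·(X̄_{2^μ}(x) − s_μ(β)/s_μ(v_μ)) + f̂(x). In particular the right-hand side agrees with f at all 2^μ + 1 points ω_0+β, …, ω_{2^μ}+β and has degree ≤ 2^μ, so it equals f. -/

import Mathlib

open Polynomial

section Aux

variable {F : Type*} [Field F] [CharP F 2]

lemma aux_omega_add {m : ℕ} (v : Fin m → F) (ω : ℕ → F)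
    (hω : ∀ l, ω l = ∑ t : Fin m, if l.testBit t then v t else 0)
    (i l : ℕ) : ω i + ω l = ω (i ^^^ l) := by
  rw [hω, hω, hω, ← Finset.sum_add_distrib]
  refine Finset.sum_congr rfl fun t _ => ?_
  rw [Nat.testBit_xor]
  rcases hb : i.testBit t <;> rcases hc : l.testBit t <;>
    simp [hb, hc, CharTwo.add_self_eq_zero]

lemma aux_shift {m μ : ℕ} (v : Fin m → F) (ω : ℕ → F)
    (hω : ∀ l, ω l = ∑ t : Fin m, if l.testBit t then v t else 0)
    (sμ : Polynomial F)
    (hsμ : sμ = ∏ l ∈ Finset.range (2 ^ μ), (X - C (ω l)))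
    {i : ℕ} (hi : i < 2 ^ μ) (x : F) :
    sμ.eval (ω i + x) = sμ.eval x := by
  subst hsμ
  rw [eval_prod, eval_prod]
  refine Finset.prod_bij' (fun l _ => l ^^^ i) (fun l _ => l ^^^ i) ?_ ?_ ?_ ?_ ?_
  · intro l hl
    exact Finset.mem_range.2 (Nat.xor_lt_two_pow (Finset.mem_range.1 hl) hi)
  · intro l hl
    exact Finset.mem_range.2 (Nat.xor_lt_two_pow (Finset.mem_range.1 hl) hi)
  · intro l _; simp [Nat.xor_assoc]
  · intro l _; simp [Nat.xor_assoc]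
  · intro l _
    simp only [eval_sub, eval_X, eval_C]
    have h1 : ω (l ^^^ i) = ω l + ω i := by
      rw [aux_omega_add v ω hω, Nat.xor_comm]
    rw [h1]
    have : (2 : F) = 0 := by exact_mod_cast CharP.cast_eq_zero F 2
    ring_nf
    linear_combination (ω i) * this

end Aux

/-- If `deg f ≤ 2^μ` and `f` agrees with a polynomial `f̂` of degree `< 2^μ`
at the `2^μ` points `ω_i + β` (`i < 2^μ`), then
`f = (f(ω_{2^μ}+β) - f̂(ω_{2^μ}+β))·(X̄_{2^μ} - s_μ(β)/s_μ(v_μ)) + f̂`,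
where `X̄_{2^μ} = s_μ / s_μ(v_μ)` and `ω_{2^μ} = v_μ`. -/
theorem stmt_14 {F : Type*} [Field F] [CharP F 2] (m μ : ℕ) (hμ : μ < m)
    (v : Fin m → F)
    (ω : ℕ → F) (hω : ∀ l, ω l = ∑ t : Fin m, if l.testBit t then v t else 0)
    (hinj : ∀ i ≤ 2 ^ μ, ∀ j ≤ 2 ^ μ, ω i = ω j → i = j)
    (sμ : Polynomial F)
    (hsμ : sμ = ∏ l ∈ Finset.range (2 ^ μ), (X - C (ω l)))
    (β : F) (f fh : Polynomial F)
    (hf : f.degree ≤ ((2 ^ μ : ℕ) : WithBot ℕ))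
    (hfh : fh.degree < ((2 ^ μ : ℕ) : WithBot ℕ))
    (hagree : ∀ i < 2 ^ μ, f.eval (ω i + β) = fh.eval (ω i + β)) :
    f = C (f.eval (ω (2 ^ μ) + β) - fh.eval (ω (2 ^ μ) + β)) *
          (C ((sμ.eval (v ⟨μ, hμ⟩))⁻¹) * sμ -
            C (sμ.eval β * (sμ.eval (v ⟨μ, hμ⟩))⁻¹)) + fh := by
  -- ω (2^μ) = v μ
  have hω2 : ω (2 ^ μ) = v ⟨μ, hμ⟩ := by
    rw [hω]
    rw [Finset.sum_eq_single (⟨μ, hμ⟩ : Fin m)]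
    · simp [Nat.testBit_two_pow_self]
    · intro t _ ht
      have hne : μ ≠ (t : ℕ) := fun h => ht (Fin.ext h.symm)
      simp [Nat.testBit_two_pow, hne]
    · simp
  -- sμ is monic of degree 2^μ
  have hmonic : sμ.Monic := by
    rw [hsμ]; exact monic_prod_of_monic _ _ fun l _ => monic_X_sub_C _
  have hdeg : sμ.natDegree = 2 ^ μ := by
    rw [hsμ, natDegree_prod _ _ fun l _ hz => (X_sub_C_ne_zero _) hz]
    simp
  have hdegd : sμ.degree = (2 ^ μ : ℕ) := by
    rw [degree_eq_natDegree hmonic.ne_zero, hdeg]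
  -- roots of sμ
  have hroot : ∀ l < 2 ^ μ, sμ.eval (ω l) = 0 := by
    intro l hl
    rw [hsμ, eval_prod]
    exact Finset.prod_eq_zero (Finset.mem_range.2 hl) (by simp)
  -- sμ.eval (v μ) ≠ 0
  have hsv : sμ.eval (v ⟨μ, hμ⟩) ≠ 0 := by
    rw [← hω2, hsμ, eval_prod]
    refine Finset.prod_ne_zero_iff.2 fun l hl => ?_
    simp only [eval_sub, eval_X, eval_C, sub_ne_zero]
    intro h
    have := hinj _ le_rfl _ (Finset.mem_range.1 hl).le h
    exact absurd (this ▸ Finset.mem_range.1 hl) (lt_irrefl _)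
  -- additivity of sμ at v μ
  have hadd : ∀ x : F, sμ.eval (v ⟨μ, hμ⟩ + x) = sμ.eval (v ⟨μ, hμ⟩) + sμ.eval x := by
    intro x
    set P : Polynomial F :=
      sμ.comp (X + C (v ⟨μ, hμ⟩)) - sμ - C (sμ.eval (v ⟨μ, hμ⟩)) with hP
    have hPeval : ∀ y : F,
        P.eval y = sμ.eval (y + v ⟨μ, hμ⟩) - sμ.eval y - sμ.eval (v ⟨μ, hμ⟩) := by
      intro y; simp [hP]
    have hP0 : P = 0 := by
      rcases eq_or_ne P 0 with h | h
      · exact h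
      have hdegP : P.degree < (2 ^ μ : ℕ) := by
        have hcm : (sμ.comp (X + C (v ⟨μ, hμ⟩))).Monic :=
          hmonic.comp (monic_X_add_C _) (by simp)
        have hcdeg : (sμ.comp (X + C (v ⟨μ, hμ⟩))).degree = (2 ^ μ : ℕ) := by
          rw [degree_eq_natDegree hcm.ne_zero, natDegree_comp]
          simp [hdeg]
        have h1 : (sμ.comp (X + C (v ⟨μ, hμ⟩)) - sμ).degree < (2 ^ μ : ℕ) := by
          have h1' := degree_sub_lt (hcdeg.trans hdegd.symm) hcm.ne_zero
            (by rw [Monic.def.1 hcm, Monic.def.1 hmonic])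
          rwa [hcdeg] at h1'
        have h2 : (C (sμ.eval (v ⟨μ, hμ⟩))).degree < ((2 ^ μ : ℕ) : WithBot ℕ) := by
          apply lt_of_le_of_lt degree_C_le
          exact_mod_cast pow_pos (by norm_num : (0:ℕ) < 2) μ
        exact lt_of_le_of_lt (degree_sub_le _ _) (max_lt h1 h2)
      apply Polynomial.eq_zero_of_natDegree_lt_card_of_eval_eq_zero P
        (f := fun i : Fin (2 ^ μ) => ω i)
        (fun i j hij => Fin.ext (hinj _ i.2.le _ j.2.le hij))
      · intro i
        rw [hPeval]
        rw [aux_shift v ω hω sμ hsμ i.2 (v ⟨μ, hμ⟩), hroot _ i.2]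
        ring
      · rw [Fintype.card_fin]
        exact (natDegree_lt_iff_degree_lt h).2 hdegP
    have hx := hPeval x
    rw [hP0] at hx
    simp only [eval_zero] at hx
    rw [add_comm]
    linear_combination -hx
  -- the difference polynomial
  set c : F := f.eval (ω (2 ^ μ) + β) - fh.eval (ω (2 ^ μ) + β) with hc
  set g : Polynomial F := C c * (C ((sμ.eval (v ⟨μ, hμ⟩))⁻¹) * sμ -
      C (sμ.eval β * (sμ.eval (v ⟨μ, hμ⟩))⁻¹)) + fh with hg
  have hdegg : g.degree ≤ (2 ^ μ : ℕ) := by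
    apply le_trans (degree_add_le _ _)
    apply max_le _ hfh.le
    apply le_trans (degree_mul_le _ _)
    calc (C c).degree + (C ((sμ.eval (v ⟨μ, hμ⟩))⁻¹) * sμ -
        C (sμ.eval β * (sμ.eval (v ⟨μ, hμ⟩))⁻¹)).degree
        ≤ 0 + (2 ^ μ : ℕ) := by
          apply add_le_add degree_C_le
          apply le_trans (degree_sub_le _ _)
          apply max_le
          · apply le_trans (degree_mul_le _ _)
            calc (C ((sμ.eval (v ⟨μ, hμ⟩))⁻¹)).degree + sμ.degree
                ≤ 0 + (2 ^ μ : ℕ) := add_le_add degree_C_le hdegd.le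
              _ = (2 ^ μ : ℕ) := zero_add _
          · exact le_trans degree_C_le (by exact_mod_cast Nat.zero_le _)
      _ = (2 ^ μ : ℕ) := zero_add _
  have key : f - g = 0 := by
    rcases eq_or_ne (f - g) 0 with h | h
    · exact h
    apply Polynomial.eq_zero_of_natDegree_lt_card_of_eval_eq_zero (f - g)
      (f := fun i : Fin (2 ^ μ + 1) => ω i + β)
      (fun i j hij => by
        have := add_right_cancel hij
        exact Fin.ext (hinj _ (Nat.lt_succ_iff.1 i.2) _ (Nat.lt_succ_iff.1 j.2) this))
    · intro i
      rcases lt_or_eq_of_le (Nat.lt_succ_iff.1 i.2) with hi | hi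
      · have h1 : sμ.eval (ω i + β) = sμ.eval β := aux_shift v ω hω sμ hsμ hi β
        simp only [eval_sub, hg, eval_add, eval_mul, eval_C, h1, hagree _ hi]
        ring
      · have hpt : ω (i : ℕ) + β = v ⟨μ, hμ⟩ + β := by rw [hi, hω2]
        have h1 : sμ.eval (v ⟨μ, hμ⟩ + β) = sμ.eval (v ⟨μ, hμ⟩) + sμ.eval β := hadd β
        simp only [eval_sub, hg, eval_add, eval_mul, eval_C, hpt, hc, hi, hω2, h1]
        field_simp
        ring
    · rw [Fintype.card_fin]
      have : (f - g).degree ≤ (2 ^ μ : ℕ) := le_trans (degree_sub_le _ _) (max_le hf hdegg)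
      have h2 := natDegree_le_iff_degree_le.2 this
      omega
  have := sub_eq_zero.1 key
  rw [hg] at this
  exact this
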